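/- Let λ₀, λ > 0 and d > 0. Set a₀ = (1 + λ₀ d)^{−1}, let f(t) = λ θ(t−d) e^{−λ(t−d)} and R(t) = Σ_{k=1}^{∞} f^{⋆k}(t). Define the step input λ_step(s) = λ₀ for s ≤ 0 and λ_step(s) = λ for s > 0, and define A_step(t) = a₀ for t ≤ 0 and A_step(t) = (a₀ λ₀ / λ)·(1 + (λ₀^{−1} − λ^{−1}) R(t+d)) for t > 0. Then A_step satisfies the normalization condition 1 = ∫_{t-d}^{t} λ_step(s) A_step(s) ds + A_step(t) for all t ∈ ℝ. -/

import Mathlib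

open MeasureTheory Set

noncomputable def gsm (lam k : ℝ) (n : ℕ) (x : ℝ) : ℝ :=
  lam^(n+1) * (x - k)^n / (n.factorial) * Real.exp (-lam*(x-k))

noncomputable def Fsm (lam k : ℝ) (n : ℕ) (x : ℝ) : ℝ :=
  1 - Real.exp (-lam*(x-k)) * ∑ j ∈ Finset.range (n+1), (lam*(x-k))^j / (j.factorial)


noncomputable def gg (lam d : ℝ) (n : ℕ) (x : ℝ) : ℝ :=
  if (n+1)*d ≤ x then lam^(n+1) * (x - (n+1)*d)^n / (n.factorial) * Real.exp (-lam*(x-(n+1)*d)) else 0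

noncomputable def FF (lam d : ℝ) (n : ℕ) (x : ℝ) : ℝ :=
  if (n+1)*d ≤ x then
    1 - Real.exp (-lam*(x-(n+1)*d)) * ∑ j ∈ Finset.range (n+1), (lam*(x-(n+1)*d))^j / (j.factorial)
  else 0


/-- Convolution of two real functions: `(u ⋆ v)(t) = ∫_ℝ u(s) v(t-s) ds`. -/
noncomputable def conv (u v : ℝ → ℝ) : ℝ → ℝ := fun t => ∫ s : ℝ, u s * v (t - s)

/-- Convolution powers: `convPow f n = f^{⋆(n+1)}`, i.e. `convPow f 0 = f`. -/
noncomputable def convPow (f : ℝ → ℝ) : ℕ → ℝ → ℝ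
  | 0 => f
  | n + 1 => conv (convPow f n) f

lemma gsm_continuous (lam k : ℝ) (n : ℕ) : Continuous (gsm lam k n) := by
  unfold gsm; fun_prop

lemma Fsm_hasDerivAt (lam k : ℝ) (n : ℕ) (x : ℝ) :
    HasDerivAt (Fsm lam k n) (gsm lam k n x) x := by
  have hlin : HasDerivAt (fun x : ℝ => -lam*(x-k)) (-lam) x := by
    simpa using ((hasDerivAt_id x).sub_const k).const_mul (-lam)
  have hexp : HasDerivAt (fun x : ℝ => Real.exp (-lam*(x-k)))
      (Real.exp (-lam*(x-k)) * (-lam)) x := hlin.exp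
  induction n with
  | zero =>
    have : Fsm lam k 0 = fun x => 1 - Real.exp (-lam*(x-k)) := by
      funext y; simp [Fsm]
    rw [this]
    have := (hexp.const_sub 1)
    refine this.congr_deriv ?_
    simp [gsm]; ring
  | succ n ih =>
    have hFs : Fsm lam k (n+1) = fun x => Fsm lam k n x -
        Real.exp (-lam*(x-k)) * ((lam*(x-k))^(n+1) / (n+1).factorial) := by
      funext y
      simp only [Fsm, Finset.sum_range_succ]
      ring
    rw [hFs]
    have hlin2 : HasDerivAt (fun x : ℝ => lam*(x-k)) lam x := by
      simpa using ((hasDerivAt_id x).sub_const k).const_mul lam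
    have hpow : HasDerivAt (fun x : ℝ => (lam*(x-k))^(n+1))
        ((n+1) * (lam*(x-k))^n * lam) x := by
      simpa using hlin2.fun_pow (n+1)
    have hprod := hexp.mul (hpow.div_const ((n+1).factorial))
    have := ih.sub hprod
    refine this.congr_deriv ?_
    have hfac : ((n+1).factorial : ℝ) = (n.factorial : ℝ) * (n+1) := by
      rw [Nat.factorial_succ]; push_cast; ring
    simp only [gsm, hfac, mul_pow]
    have h1 : (0:ℝ) < n.factorial := by positivity
    field_simp
    ring

lemma gg_eq_indicator (lam d : ℝ) (n : ℕ) :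
    gg lam d n = Set.indicator (Set.Ici (((n:ℝ)+1)*d)) (gsm lam (((n:ℝ)+1)*d) n) := by
  funext x
  rw [gg, Set.indicator_apply, gsm]
  push_cast
  rfl

lemma gg_intervalIntegrable (lam d : ℝ) (n : ℕ) (a b : ℝ) :
    IntervalIntegrable (gg lam d n) volume a b := by
  rw [gg_eq_indicator]
  have h := (gsm_continuous lam (((n:ℝ)+1)*d) n).intervalIntegrable (μ := volume) a b
  exact ⟨h.1.indicator measurableSet_Ici, h.2.indicator measurableSet_Ici⟩

lemma ae_ne (c : ℝ) : ∀ᵐ x : ℝ, x ≠ c := by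
  rw [MeasureTheory.ae_iff]
  simp only [not_not, Set.setOf_eq_eq_singleton]
  exact Real.volume_singleton

lemma Fsm_self (lam k : ℝ) (n : ℕ) : Fsm lam k n k = 0 := by
  rw [Fsm, sub_self, mul_zero, Real.exp_zero, one_mul,
    Finset.sum_eq_single 0 (by intro j _ hj; simp [zero_pow hj])
      (by intro h; simp at h)]
  simp

lemma gg_integral_zero (lam d : ℝ) (n : ℕ) {a b : ℝ} (hab : a ≤ b) (hb : b ≤ ((n:ℝ)+1)*d) :
    ∫ x in a..b, gg lam d n x = 0 := by
  rw [show (0:ℝ) = ∫ x in a..b, (0:ℝ) by simp]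
  apply intervalIntegral.integral_congr_ae
  filter_upwards [ae_ne (((n:ℝ)+1)*d)] with x hx hmem
  rw [Set.mem_uIoc] at hmem
  rw [gg]
  push_cast
  rcases hmem with h | h
  · exact if_neg (fun hc => hx (le_antisymm (le_trans h.2 hb) hc))
  · exact absurd (lt_of_lt_of_le h.1 (le_trans h.2 hab)) (lt_irrefl b)

lemma gg_integral_right (lam d : ℝ) (n : ℕ) {a b : ℝ} (ha : ((n:ℝ)+1)*d ≤ a) (hab : a ≤ b) :
    ∫ x in a..b, gg lam d n x =
      Fsm lam (((n:ℝ)+1)*d) n b - Fsm lam (((n:ℝ)+1)*d) n a := by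
  have hcongr : Set.EqOn (gg lam d n) (gsm lam (((n:ℝ)+1)*d) n) (Set.uIcc a b) := by
    intro x hx
    rw [Set.mem_uIcc] at hx
    have hax : a ≤ x := by rcases hx with h | h; exact h.1; linarith [h.1, hab]
    rw [gg]; push_cast
    rw [if_pos (le_trans ha hax)]; rfl
  rw [intervalIntegral.integral_congr hcongr]
  exact intervalIntegral.integral_eq_sub_of_hasDerivAt
    (fun x _ => Fsm_hasDerivAt lam (((n:ℝ)+1)*d) n x)
    ((gsm_continuous lam (((n:ℝ)+1)*d) n).intervalIntegrable a b)

lemma conv_gg (lam d : ℝ) (f : ℝ → ℝ)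
    (hf : ∀ t : ℝ, f t = if d ≤ t then lam * Real.exp (-lam * (t - d)) else 0)
    (n : ℕ) (t : ℝ) : conv (gg lam d n) f t = gg lam d (n+1) t := by
  have key : (fun s => gg lam d n s * f (t - s)) =
      Set.indicator (Set.Icc ((n+1)*d) (t-d))
        (fun s => (lam^(n+2) * Real.exp (-lam*(t-(n+2)*d)) / n.factorial) * (s - (n+1)*d)^n) := by
    funext s
    rw [hf, gg]
    by_cases h1 : ((n:ℝ)+1)*d ≤ s <;> by_cases h2 : d ≤ t - s
    · rw [if_pos h1, if_pos h2, Set.indicator_of_mem (Set.mem_Icc.mpr ⟨h1, by linarith⟩)]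
      have hexp : Real.exp (-lam * (s - ((n:ℝ)+1) * d)) * Real.exp (-lam * (t - s - d)) =
          Real.exp (-lam*(t-((n:ℝ)+2)*d)) := by rw [← Real.exp_add]; congr 1; ring
      push_cast
      linear_combination (lam ^ (n+1) * (s - ((n:ℝ)+1)*d)^n / n.factorial * lam) * hexp
    · rw [if_neg h2, mul_zero,
        Set.indicator_of_notMem (fun h => h2 (by linarith [(Set.mem_Icc.mp h).2]))]
    · rw [if_neg h1, zero_mul,
        Set.indicator_of_notMem (fun h => h1 (Set.mem_Icc.mp h).1)]
    · rw [if_neg h1, zero_mul,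
        Set.indicator_of_notMem (fun h => h1 (Set.mem_Icc.mp h).1)]
  unfold conv
  rw [key, MeasureTheory.integral_indicator measurableSet_Icc,
    MeasureTheory.integral_Icc_eq_integral_Ioc]
  by_cases hle : ((n:ℝ)+1)*d ≤ t - d
  · rw [← intervalIntegral.integral_of_le hle, intervalIntegral.integral_const_mul,
      intervalIntegral.integral_comp_sub_right (fun x => x ^ n) (((n:ℝ)+1)*d), sub_self,
      integral_pow, gg]
    push_cast
    rw [if_pos (by linarith)]
    have hfac : ((n+1).factorial : ℝ) = (n.factorial : ℝ) * (n+1) := by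
      rw [Nat.factorial_succ]; push_cast; ring
    rw [hfac, zero_pow (by omega)]
    have hn : (0:ℝ) < n.factorial := by positivity
    field_simp
    ring
  · rw [Set.Ioc_eq_empty (by intro h; exact hle (le_of_lt h)), Measure.restrict_empty,
      integral_zero_measure, gg]
    push_cast
    rw [if_neg (by intro h; exact hle (by linarith))]

lemma convPow_eq (lam d : ℝ) (f : ℝ → ℝ)
    (hf : ∀ t : ℝ, f t = if d ≤ t then lam * Real.exp (-lam * (t - d)) else 0)
    (n : ℕ) : convPow f n = gg lam d n := by
  induction n with
  | zero =>
    funext t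
    simp only [convPow, hf, gg, pow_one, pow_zero, Nat.factorial_zero]
    norm_num
  | succ n ih =>
    funext t
    show conv (convPow f n) f t = _
    rw [ih, conv_gg lam d f hf]

lemma FF_pos (lam d : ℝ) (n : ℕ) {x : ℝ} (hx : ((n:ℝ)+1)*d ≤ x) :
    FF lam d n x = Fsm lam (((n:ℝ)+1)*d) n x := if_pos hx

lemma FF_zero (lam d : ℝ) (n : ℕ) {x : ℝ} (hx : x ≤ ((n:ℝ)+1)*d) :
    FF lam d n x = 0 := by
  rw [FF]
  split_ifs with h
  · have hxk : x = ((n:ℝ)+1)*d := le_antisymm hx h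
    rw [hxk]
    exact Fsm_self lam (((n:ℝ)+1)*d) n
  · rfl

lemma gg_integral (lam d : ℝ) (n : ℕ) {a b : ℝ} (hab : a ≤ b) :
    ∫ x in a..b, gg lam d n x = FF lam d n b - FF lam d n a := by
  set k := ((n:ℝ)+1)*d with hk
  by_cases h1 : b ≤ k
  · rw [gg_integral_zero lam d n hab h1, FF_zero lam d n h1,
      FF_zero lam d n (le_trans hab h1), sub_zero]
  · push_neg at h1
    by_cases h2 : k ≤ a
    · rw [gg_integral_right lam d n h2 hab, FF_pos lam d n (le_of_lt h1), FF_pos lam d n h2]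
    · push_neg at h2
      rw [← intervalIntegral.integral_add_adjacent_intervals
          (gg_intervalIntegrable lam d n a k) (gg_intervalIntegrable lam d n k b),
        gg_integral_zero lam d n (le_of_lt h2) le_rfl,
        gg_integral_right lam d n le_rfl (le_of_lt h1), zero_add,
        Fsm_self, sub_zero, FF_pos lam d n (le_of_lt h1), FF_zero lam d n (le_of_lt h2),
        sub_zero]

lemma telescope (lam d : ℝ) (n : ℕ) (x : ℝ) :
    lam * FF lam d n (x - d) = gg lam d (n+1) x + lam * FF lam d (n+1) x := by
  by_cases h : ((n:ℝ)+1)*d ≤ x - d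
  · rw [FF, if_pos h, gg, FF]
    push_cast
    rw [if_pos (by linarith), if_pos (by linarith)]
    have harg : x - d - ((n:ℝ)+1)*d = x - ((n:ℝ)+1+1)*d := by ring
    rw [harg]
    have hfac : ((n+1).factorial : ℝ) = (n.factorial : ℝ) * (n+1) := by
      rw [Nat.factorial_succ]; push_cast; ring
    rw [Finset.sum_range_succ (n := n+1), hfac]
    have h1 : (0:ℝ) < n.factorial := by positivity
    simp only [mul_pow]
    field_simp
    ring
  · rw [FF, if_neg h, gg, FF]
    push_cast
    rw [if_neg (by intro hc; exact h (by linarith)), if_neg (by intro hc; exact h (by linarith))]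
    ring

lemma key_identity (lam d : ℝ) (hlam : 0 < lam) (hd : 0 < d) (R : ℝ → ℝ)
    (hRg : ∀ s : ℝ, R s = ∑' n : ℕ, gg lam d n s) {u : ℝ} (hu : d < u) :
    lam * (∫ s in (max d (u-d))..u, R s) + R u = lam := by
  set N := Nat.ceil (u/d) with hN
  have hNd : u ≤ (N:ℝ)*d := by
    rw [← div_le_iff₀ hd] at *
    exact Nat.le_ceil (u/d)
  have hggz : ∀ s : ℝ, s ≤ u → ∀ n, N ≤ n → gg lam d n s = 0 := by
    intro s hs n hn
    rw [gg, if_neg]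
    intro hc
    have : ((N:ℝ)) ≤ (n:ℝ) := by exact_mod_cast hn
    nlinarith
  have hRs : ∀ s : ℝ, s ≤ u → R s = ∑ n ∈ Finset.range N, gg lam d n s := by
    intro s hs
    rw [hRg]
    exact tsum_eq_sum (fun n hn => hggz s hs n (by simpa using hn))
  set m := max d (u - d) with hm
  have hmu : m ≤ u := max_le (le_of_lt hu) (by linarith)
  have hIcongr : ∫ s in m..u, R s = ∑ n ∈ Finset.range N, (FF lam d n u - FF lam d n m) := by
    rw [intervalIntegral.integral_congr (g := fun s => ∑ n ∈ Finset.range N, gg lam d n s)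
        (fun x hx => by
          rw [Set.uIcc_of_le hmu] at hx
          exact hRs x hx.2),
      intervalIntegral.integral_finset_sum (fun i _ => gg_intervalIntegrable lam d i m u)]
    exact Finset.sum_congr rfl (fun n _ => gg_integral lam d n hmu)
  have hFFm : ∀ n : ℕ, FF lam d n m = FF lam d n (u - d) := by
    intro n
    rcases le_or_gt d (u - d) with h | h
    · rw [hm, max_eq_right h]
    · rw [hm, max_eq_left (le_of_lt h), FF_zero lam d n (by nlinarith [Nat.cast_nonneg (α := ℝ) n]),
        FF_zero lam d n (by nlinarith [Nat.cast_nonneg (α := ℝ) n])]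
  have hbN : lam * FF lam d N u + gg lam d N u = 0 := by
    have hcond : ¬ ((N:ℝ)+1)*d ≤ u := by nlinarith
    rw [FF, if_neg hcond, gg, if_neg hcond]
    ring
  have hb0 : lam * FF lam d 0 u + gg lam d 0 u = lam := by
    rw [FF, gg]
    push_cast
    rw [if_pos (by linarith), if_pos (by linarith)]
    simp [Finset.sum_range_one]
    ring
  rw [hIcongr, hRs u le_rfl, Finset.mul_sum, ← Finset.sum_add_distrib]
  have hsum : ∀ n ∈ Finset.range N,
      lam * (FF lam d n u - FF lam d n m) + gg lam d n u =
      (fun j => lam * FF lam d j u + gg lam d j u) n -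
        (fun j => lam * FF lam d j u + gg lam d j u) (n+1) := by
    intro n _
    rw [hFFm n]
    linear_combination (-1 : ℝ) * telescope lam d n u
  rw [Finset.sum_congr rfl hsum, Finset.sum_range_sub' (fun j => lam * FF lam d j u + gg lam d j u) N]
  rw [hbN, hb0, sub_zero]

/-- with `a₀ = (1 + lam₀ d)⁻¹`, `f(t) = lam·θ(t-d)·e^{-lam(t-d)}`,
`R = Σ_{k≥1} f^{⋆k}`, the step input `lamStep` (equal to `lam₀` for `s ≤ 0` and `lam`
for `s > 0`) and the step response
`Astep(t) = a₀` for `t ≤ 0`, `Astep(t) = (a₀ lam₀/lam)(1 + (lam₀⁻¹ - lam⁻¹) R(t+d))`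
for `t > 0`, the normalization condition
`1 = ∫_{t-d}^t lamStep(s) Astep(s) ds + Astep(t)` holds for all `t`. -/
theorem stmt_4 (lam0 lam d : ℝ) (hlam0 : 0 < lam0) (hlam : 0 < lam) (hd : 0 < d)
    (f R : ℝ → ℝ)
    (hf : ∀ t : ℝ, f t = if d ≤ t then lam * Real.exp (-lam * (t - d)) else 0)
    (hR : ∀ t : ℝ, R t = ∑' n : ℕ, convPow f n t)
    (a0 : ℝ) (ha0 : a0 = (1 + lam0 * d)⁻¹)
    (lamStep Astep : ℝ → ℝ)
    (hlamStep : ∀ s : ℝ, lamStep s = if s ≤ 0 then lam0 else lam)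
    (hAstep : ∀ t : ℝ, Astep t =
      if t ≤ 0 then a0
      else a0 * lam0 / lam * (1 + (lam0⁻¹ - lam⁻¹) * R (t + d))) :
    ∀ t : ℝ, 1 = (∫ s in (t - d)..t, lamStep s * Astep s) + Astep t := by
  intro t
  have ha0pos : (0:ℝ) < 1 + lam0 * d := by positivity
  have hRg : ∀ s : ℝ, R s = ∑' n : ℕ, gg lam d n s := by
    intro s; rw [hR]; exact tsum_congr (fun n => by rw [convPow_eq lam d f hf])
  rcases le_or_gt t 0 with ht | ht
  · have hint : ∫ s in (t-d)..t, lamStep s * Astep s = (t - (t-d)) * (lam0 * a0) := by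
      rw [intervalIntegral.integral_congr (g := fun _ => lam0 * a0) (fun x hx => by
        rw [Set.uIcc_of_le (by linarith : t - d ≤ t)] at hx
        rw [hlamStep, hAstep, if_pos (le_trans hx.2 ht), if_pos (le_trans hx.2 ht)]),
        intervalIntegral.integral_const, smul_eq_mul]
    rw [hint, hAstep, if_pos ht, ha0]
    field_simp
    ring
  · -- t > 0
    have hu : d < t + d := by linarith
    have hkey := key_identity lam d hlam hd R hRg hu
    rw [show t + d - d = t by ring] at hkey
    set N := Nat.ceil ((t+d)/d) with hN
    have hNd : t + d ≤ (N:ℝ)*d := by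
      rw [← div_le_iff₀ hd]
      exact Nat.le_ceil _
    have hRs : ∀ s : ℝ, s ≤ t + d → R s = ∑ n ∈ Finset.range N, gg lam d n s := by
      intro s hs
      rw [hRg]
      refine tsum_eq_sum (fun n hn => ?_)
      have hn' : (N:ℝ) ≤ (n:ℝ) := by exact_mod_cast Nat.le_of_not_lt (fun h => hn (Finset.mem_range.mpr h))
      rw [gg, if_neg]
      intro hc
      nlinarith
    set H : ℝ → ℝ := fun s => ∑ n ∈ Finset.range N, gg lam d n s with hH
    have hHint : ∀ a b : ℝ, IntervalIntegrable H volume a b := by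
      intro a b
      have := IntervalIntegrable.sum (μ := volume) (a := a) (b := b) (Finset.range N)
        (f := fun i => gg lam d i) (fun i _ => gg_intervalIntegrable lam d i a b)
      have heq : (∑ x ∈ Finset.range N, gg lam d x) =
          (fun s => ∑ n ∈ Finset.range N, gg lam d n s) :=
        funext fun s => Finset.sum_apply s (Finset.range N) (gg lam d)
      rwa [heq] at this
    have hHd : ∀ a b : ℝ, IntervalIntegrable (fun s => H (s + d)) volume a b := by
      intro a b
      have := (hHint (a+d) (b+d)).comp_add_right d
      simpa using this
    have hFeq : ∀ s ∈ Set.Ioc (0:ℝ) t, lamStep s * Astep s =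
        a0*lam0 + (a0*lam0*(lam0⁻¹ - lam⁻¹)) * H (s + d) := by
      intro s hs
      rw [hlamStep, hAstep, if_neg (not_le.mpr hs.1), if_neg (not_le.mpr hs.1), hH]
      rw [show R (s + d) = ∑ n ∈ Finset.range N, gg lam d n (s+d) from
        hRs (s+d) (by linarith [hs.2])]
      field_simp
    have hIval : ∀ a b : ℝ, 0 ≤ a → a ≤ b → b ≤ t →
        ∫ s in a..b, lamStep s * Astep s
          = a0*lam0*(b-a) + (a0*lam0*(lam0⁻¹-lam⁻¹)) * ∫ s in (a+d)..(b+d), H s := by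
      intro a b ha hab hbt
      rw [intervalIntegral.integral_congr_ae
        (g := fun s => a0*lam0 + (a0*lam0*(lam0⁻¹-lam⁻¹)) * H (s+d))
        (Filter.Eventually.of_forall (fun x hx => by
          rw [Set.uIoc_of_le hab] at hx
          exact hFeq x ⟨lt_of_le_of_lt ha hx.1, le_trans hx.2 hbt⟩))]
      rw [intervalIntegral.integral_add (intervalIntegrable_const)
        ((hHd a b).const_mul _), intervalIntegral.integral_const, smul_eq_mul,
        intervalIntegral.integral_const_mul, intervalIntegral.integral_comp_add_right H d]
      ring
    have hint2 : ∀ a b : ℝ, 0 ≤ a → a ≤ b → b ≤ t →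
        IntervalIntegrable (fun s => lamStep s * Astep s) volume a b := by
      intro a b ha hab hbt
      rw [intervalIntegrable_iff, Set.uIoc_of_le hab]
      refine (integrableOn_congr_fun (g := fun s => a0*lam0 + (a0*lam0*(lam0⁻¹-lam⁻¹)) * H (s+d))
        (fun x hx => hFeq x ⟨lt_of_le_of_lt ha hx.1, le_trans hx.2 hbt⟩) measurableSet_Ioc).mpr ?_
      have : IntervalIntegrable (fun s => a0*lam0 + (a0*lam0*(lam0⁻¹-lam⁻¹)) * H (s+d)) volume a b :=
        (intervalIntegrable_const).add ((hHd a b).const_mul _)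
      rw [intervalIntegrable_iff, Set.uIoc_of_le hab] at this
      exact this
    have hHR : ∀ a : ℝ, a ≤ t + d → ∫ s in a..(t+d), H s = ∫ s in a..(t+d), R s := by
      intro a hau
      exact intervalIntegral.integral_congr (fun x hx => by
        rw [Set.uIcc_of_le hau] at hx
        exact (hRs x hx.2).symm)
    have hAt : Astep t = a0 * lam0 / lam * (1 + (lam0⁻¹ - lam⁻¹) * R (t + d)) := by
      rw [hAstep, if_neg (not_le.mpr ht)]
    rcases le_or_gt t d with htd | htd
    · -- 0 < t ≤ d
      rw [max_eq_left htd] at hkey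
      have hi1 : IntervalIntegrable (fun s => lamStep s * Astep s) volume (t-d) 0 := by
        rw [intervalIntegrable_iff, Set.uIoc_of_le (by linarith : t - d ≤ 0)]
        refine (integrableOn_congr_fun (g := fun _ => lam0 * a0) (fun x hx => by
          rw [hlamStep, hAstep, if_pos hx.2, if_pos hx.2]) measurableSet_Ioc).mpr ?_
        exact (integrableOn_const_iff).mpr (Or.inr measure_Ioc_lt_top)
      have hi2 := hint2 0 t le_rfl (le_of_lt ht) le_rfl
      rw [← intervalIntegral.integral_add_adjacent_intervals hi1 hi2]
      have hI1 : ∫ s in (t-d)..0, lamStep s * Astep s = (0-(t-d)) * (lam0 * a0) := by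
        rw [intervalIntegral.integral_congr (g := fun _ => lam0 * a0) (fun x hx => by
          rw [Set.uIcc_of_le (by linarith : t - d ≤ 0)] at hx
          rw [hlamStep, hAstep, if_pos hx.2, if_pos hx.2]),
          intervalIntegral.integral_const, smul_eq_mul]
      rw [hI1, hIval 0 t le_rfl (le_of_lt ht) le_rfl, show (0:ℝ)+d = d by ring,
        hHR d (by linarith), hAt]
      have hIeq : (∫ s in d..(t+d), R s) = (lam - R (t+d))/lam := by
        field_simp
        linarith
      rw [hIeq, ha0]
      field_simp
      ring
    · -- t > d
      rw [max_eq_right (le_of_lt htd)] at hkey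
      rw [hIval (t-d) t (by linarith) (by linarith) le_rfl, show t-d+d = t by ring,
        hHR t (by linarith), hAt]
      have hIeq : (∫ s in t..(t+d), R s) = (lam - R (t+d))/lam := by
        field_simp
        linarith
      rw [hIeq, ha0]
      field_simp
      ring
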